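/- Under the hypotheses of the Birkhoff decomposition theorem (graded connected bialgebra H, Rota–Baxter projection P on a commutative algebra A whose kernel and image are subalgebras), the Birkhoff decomposition is unique: if φ = φ_-^{*-1} * φ_+ = ψ_-^{*-1} * ψ_+ with φ_±, ψ_± characters such that φ_-, ψ_- take values in im(P) on elements of positive degree and φ_+, ψ_+ take values in ker(P), then φ_- = ψ_- and φ_+ = ψ_+. -/

import Mathlib

/- STATEMENT 5: Uniqueness of the Birkhoff decomposition. If a character `φ` of a
graded connected bialgebra has two Birkhoff decompositions
`φ = φ₋^{*-1} * φ₊ = ψ₋^{*-1} * ψ₊` with `φ₋, ψ₋` valued in `im P` in positive degree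
and `φ₊, ψ₊` valued in `ker P`, then `φ₋ = ψ₋` and `φ₊ = ψ₊`. -/

variable {R H A : Type*} [Field R] [Ring H] [Bialgebra R H]
  [CommRing A] [Algebra R A]

noncomputable def conv (f g : H →ₗ[R] A) : H →ₗ[R] A :=
  (LinearMap.mul' R A).comp ((TensorProduct.map f g).comp
    (Coalgebra.comul : H →ₗ[R] TensorProduct R H H))

noncomputable def convUnit : H →ₗ[R] A :=
  (Algebra.linearMap R A).comp (Coalgebra.counit : H →ₗ[R] R)

def IsCharacter (f : H →ₗ[R] A) : Prop :=
  f 1 = 1 ∧ ∀ x y : H, f (x * y) = f x * f y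

def Connected (ℬ : ℕ → Submodule R H) : Prop :=
  ℬ 0 ≤ Submodule.span R {(1 : H)}

def ComulGraded (ℬ : ℕ → Submodule R H) : Prop :=
  ∀ n : ℕ, ∀ x ∈ ℬ n, (Coalgebra.comul (R := R) x : TensorProduct R H H) ∈
    ⨆ (p : ℕ × ℕ) (_ : p.1 + p.2 = n),
      LinearMap.range (TensorProduct.map (ℬ p.1).subtype (ℬ p.2).subtype)

open TensorProduct

section AuxConv

lemma conv_apply_def (f g : H →ₗ[R] A) (x : H) :
    conv f g x = LinearMap.mul' R A (TensorProduct.map f g (Coalgebra.comul (R := R) x)) := rfl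

lemma mul'_assoc_comp :
    LinearMap.mul' R A ∘ₗ (LinearMap.mul' R A).lTensor A ∘ₗ
        (TensorProduct.assoc R A A A).toLinearMap =
      LinearMap.mul' R A ∘ₗ (LinearMap.mul' R A).rTensor A := by
  apply TensorProduct.ext_threefold
  intro a b c
  simp [LinearMap.mul'_apply, mul_assoc]

lemma mul'_assoc_aux (t : (A ⊗[R] A) ⊗[R] A) :
    LinearMap.mul' R A ((LinearMap.mul' R A).lTensor A (TensorProduct.assoc R A A A t)) =
      LinearMap.mul' R A ((LinearMap.mul' R A).rTensor A t) := by
  have h := LinearMap.congr_fun (mul'_assoc_comp (R := R) (A := A)) t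
  simpa using h

lemma conv_assoc (f g h : H →ₗ[R] A) : conv (conv f g) h = conv f (conv g h) := by
  have e1 : TensorProduct.map (conv f g) h
      = ((LinearMap.mul' R A).rTensor A) ∘ₗ (TensorProduct.map (TensorProduct.map f g) h) ∘ₗ
        ((Coalgebra.comul (R := R) (A := H)).rTensor H) := by
    simp only [LinearMap.rTensor, ← TensorProduct.map_comp]
    unfold conv
    congr 1 <;> simp
  have e2 : TensorProduct.map f (conv g h)
      = ((LinearMap.mul' R A).lTensor A) ∘ₗ (TensorProduct.map f (TensorProduct.map g h)) ∘ₗ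
        ((Coalgebra.comul (R := R) (A := H)).lTensor H) := by
    simp only [LinearMap.lTensor, ← TensorProduct.map_comp]
    unfold conv
    congr 1 <;> simp
  ext x
  rw [conv_apply_def, conv_apply_def, e1, e2]
  simp only [LinearMap.comp_apply]
  have hco : (Coalgebra.comul (R := R)).lTensor H (Coalgebra.comul (R := R) x)
      = TensorProduct.assoc R H H H
        ((Coalgebra.comul (R := R)).rTensor H (Coalgebra.comul (R := R) x)) :=
    (Coalgebra.coassoc_apply x).symm
  rw [hco, TensorProduct.map_map_assoc, mul'_assoc_aux]

lemma conv_unit_right (f : H →ₗ[R] A) : conv f convUnit = f := by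
  have e1 : TensorProduct.map f (convUnit : H →ₗ[R] A)
      = (TensorProduct.map f (Algebra.linearMap R A)) ∘ₗ
        ((Coalgebra.counit (R := R) (A := H)).lTensor H) := by
    simp only [LinearMap.lTensor, ← TensorProduct.map_comp]
    unfold convUnit
    congr 1 <;> simp
  ext x
  rw [conv_apply_def, e1]
  simp only [LinearMap.comp_apply, Coalgebra.lTensor_counit_comul]
  simp [LinearMap.mul'_apply]

lemma conv_unit_left (f : H →ₗ[R] A) : conv convUnit f = f := by
  have e1 : TensorProduct.map (convUnit : H →ₗ[R] A) f
      = (TensorProduct.map (Algebra.linearMap R A) f) ∘ₗ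
        ((Coalgebra.counit (R := R) (A := H)).rTensor H) := by
    simp only [LinearMap.rTensor, ← TensorProduct.map_comp]
    unfold convUnit
    congr 1 <;> simp
  ext x
  rw [conv_apply_def, e1]
  simp only [LinearMap.comp_apply, Coalgebra.rTensor_counit_comul]
  simp [LinearMap.mul'_apply, Algebra.smul_def]

lemma conv_one (f g : H →ₗ[R] A) : conv f g 1 = f 1 * g 1 := by
  rw [conv_apply_def, Bialgebra.comul_one, Algebra.TensorProduct.one_def]
  simp [LinearMap.mul'_apply]

lemma convUnit_one : (convUnit : H →ₗ[R] A) 1 = 1 := by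
  simp [convUnit]

end AuxConv

section AuxGraded

/-- Pushing membership through the range of a tensor product of inclusions. -/
lemma map_range_mem {P1 P2 : Submodule R H} {V : Type*} [AddCommMonoid V] [Module R V]
    (G : H ⊗[R] H →ₗ[R] V) {M : Submodule R V} {u : H ⊗[R] H}
    (hu : u ∈ LinearMap.range (TensorProduct.map P1.subtype P2.subtype))
    (h : ∀ a ∈ P1, ∀ b ∈ P2, G (a ⊗ₜ[R] b) ∈ M) : G u ∈ M := by
  obtain ⟨t, rfl⟩ := hu
  induction t using TensorProduct.induction_on with
  | zero => simpa using zero_mem M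
  | tmul a b => simpa using h a a.2 b b.2
  | add a b ha hb => rw [map_add, map_add]; exact add_mem ha hb

lemma left_one_repr {ℬ : ℕ → Submodule R H} (hconn : Connected ℬ) {j : ℕ} {u : H ⊗[R] H}
    (hu : u ∈ LinearMap.range (TensorProduct.map (ℬ 0).subtype (ℬ j).subtype)) :
    ∃ z ∈ ℬ j, u = 1 ⊗ₜ[R] z := by
  obtain ⟨t, rfl⟩ := hu
  induction t using TensorProduct.induction_on with
  | zero => exact ⟨0, zero_mem _, by simp⟩
  | tmul a b =>
    obtain ⟨c, hc⟩ := Submodule.mem_span_singleton.mp (hconn a.2)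
    refine ⟨c • (b : H), Submodule.smul_mem _ _ b.2, ?_⟩
    rw [TensorProduct.map_tmul]
    rw [Submodule.coe_subtype, Submodule.coe_subtype, ← hc, TensorProduct.smul_tmul]
  | add a b ha hb =>
    obtain ⟨z1, hz1, e1⟩ := ha
    obtain ⟨z2, hz2, e2⟩ := hb
    exact ⟨z1 + z2, add_mem hz1 hz2, by rw [map_add, e1, e2, TensorProduct.tmul_add]⟩

lemma right_one_repr {ℬ : ℕ → Submodule R H} (hconn : Connected ℬ) {j : ℕ} {u : H ⊗[R] H}
    (hu : u ∈ LinearMap.range (TensorProduct.map (ℬ j).subtype (ℬ 0).subtype)) :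
    ∃ z ∈ ℬ j, u = z ⊗ₜ[R] (1 : H) := by
  obtain ⟨t, rfl⟩ := hu
  induction t using TensorProduct.induction_on with
  | zero => exact ⟨0, zero_mem _, by simp⟩
  | tmul a b =>
    obtain ⟨c, hc⟩ := Submodule.mem_span_singleton.mp (hconn b.2)
    refine ⟨c • (a : H), Submodule.smul_mem _ _ a.2, ?_⟩
    rw [TensorProduct.map_tmul]
    rw [Submodule.coe_subtype, Submodule.coe_subtype, ← hc, ← TensorProduct.smul_tmul]
  | add a b ha hb =>
    obtain ⟨z1, hz1, e1⟩ := ha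
    obtain ⟨z2, hz2, e2⟩ := hb
    exact ⟨z1 + z2, add_mem hz1 hz2, by rw [map_add, e1, e2, TensorProduct.add_tmul]⟩

set_option maxHeartbeats 1000000 in
/-- The key structure lemma: for homogeneous `x` of positive degree, the counit
vanishes on `x` and `comul x = 1 ⊗ x + x ⊗ 1 + (middle terms)`. -/
lemma key_repr {ℬ : ℕ → Submodule R H} [GradedAlgebra ℬ] [Nontrivial H]
    (hconn : Connected ℬ) (hgr : ComulGraded ℬ) {n : ℕ} (hn : 0 < n) {x : H} (hx : x ∈ ℬ n) :
    Coalgebra.counit (R := R) x = (0 : R) ∧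
    ∃ (m : ℕ) (y : ℕ → H ⊗[R] H),
      (∀ k, k < m → 0 < k + 1 ∧ k + 1 < n ∧
        y k ∈ LinearMap.range (TensorProduct.map (ℬ (k+1)).subtype (ℬ (n-(k+1))).subtype)) ∧
      Coalgebra.comul (R := R) x = 1 ⊗ₜ[R] x + x ⊗ₜ[R] 1 + ∑ k ∈ Finset.range m, y k := by
  classical
  obtain ⟨m, rfl⟩ : ∃ m, n = m + 1 := ⟨n - 1, by omega⟩
  have h := hgr (m+1) x hx
  rw [iSup_subtype'] at h
  rw [Submodule.mem_iSup_iff_exists_finsupp] at h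
  obtain ⟨f, hf, hsum⟩ := h
  set Y : ℕ → H ⊗[R] H := fun k =>
    if hk : k ≤ m + 1 then f ⟨(k, m + 1 - k), by simp; omega⟩ else 0 with hY
  have hYmem : ∀ k, k ≤ m + 1 →
      Y k ∈ LinearMap.range (TensorProduct.map (ℬ k).subtype (ℬ (m+1-k)).subtype) := by
    intro k hk
    simp only [hY, dif_pos hk]
    exact hf ⟨(k, m+1-k), by simp; omega⟩
  have hYsum : Coalgebra.comul (R := R) x = ∑ k ∈ Finset.range (m+2), Y k := by
    rw [← hsum, Finsupp.sum]
    have h1 : ∑ q ∈ f.support, f q = ∑ q ∈ f.support, Y (q : ℕ × ℕ).1 := by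
      refine Finset.sum_congr rfl fun q _ => ?_
      have hq2 : (q : ℕ × ℕ).1 + (q : ℕ × ℕ).2 = m + 1 := q.2
      have hq : (q : ℕ × ℕ).1 ≤ m + 1 := by omega
      simp only [hY, dif_pos hq]
      congr 1
      apply Subtype.ext
      show ((q : ℕ × ℕ).1, (q : ℕ × ℕ).2) = ((q : ℕ × ℕ).1, m + 1 - (q : ℕ × ℕ).1)
      rw [show m + 1 - (q : ℕ × ℕ).1 = (q : ℕ × ℕ).2 by omega]
    have h2 : ∑ q ∈ f.support.image
          (fun q : {p : ℕ × ℕ // p.1 + p.2 = m + 1} => (q : ℕ × ℕ).1), Y q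
        = ∑ q ∈ f.support, Y (q : ℕ × ℕ).1 :=
      Finset.sum_image (fun q hq q' hq' he => by
        have h2 := q.2
        have h2' := q'.2
        apply Subtype.ext
        apply Prod.ext he
        omega)
    rw [h1, ← h2]
    apply Finset.sum_subset
    · intro k hk
      simp only [Finset.mem_image] at hk
      obtain ⟨q, _, rfl⟩ := hk
      have := q.2
      exact Finset.mem_range.mpr (by omega)
    · intro k _ hnk
      by_cases hk' : k ≤ m + 1
      · simp only [hY, dif_pos hk']
        by_contra hne
        exact hnk (Finset.mem_image.mpr ⟨⟨(k, m+1-k), by simp; omega⟩,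
          Finsupp.mem_support_iff.mpr hne, rfl⟩)
      · simp only [hY, dif_neg hk']
  obtain ⟨z, hzmem, hz0⟩ := left_one_repr hconn (hYmem 0 (by omega))
  rw [Nat.sub_zero] at hzmem
  have hwa := hYmem (m+1) le_rfl
  rw [Nat.sub_self] at hwa
  obtain ⟨w, hwmem, hwn⟩ := right_one_repr hconn hwa
  have hsplit : Coalgebra.comul (R := R) x
      = (∑ k ∈ Finset.range m, Y (k+1)) + Y (m+1) + Y 0 := by
    rw [hYsum, Finset.sum_range_succ' Y (m+1), Finset.sum_range_succ]
  -- projections onto graded components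
  set pr : ℕ → H →ₗ[R] H := fun j =>
    (ℬ j).subtype ∘ₗ (DirectSum.component R ℕ (fun i => (ℬ i)) j) ∘ₗ
      (DirectSum.decomposeLinearEquiv ℬ).toLinearMap with hpr
  have pr_apply : ∀ j (h : H), pr j h = ((DirectSum.decompose ℬ h) j : H) := fun j h => rfl
  have pr_same : ∀ j (h : H), h ∈ ℬ j → pr j h = h := fun j h hh => by
    rw [pr_apply, DirectSum.decompose_of_mem_same ℬ hh]
  have pr_ne : ∀ i j (h : H), h ∈ ℬ i → i ≠ j → pr j h = 0 := fun i j h hh hij => by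
    rw [pr_apply, DirectSum.decompose_of_mem_ne ℬ hh hij]
  -- applying the counit identities
  set L : H ⊗[R] H →ₗ[R] H :=
    (TensorProduct.lid R H).toLinearMap ∘ₗ (Coalgebra.counit (R := R) (A := H)).rTensor H with hL
  set Rr : H ⊗[R] H →ₗ[R] H :=
    (TensorProduct.rid R H).toLinearMap ∘ₗ (Coalgebra.counit (R := R) (A := H)).lTensor H with hR
  have hLtmul : ∀ (a b : H), L (a ⊗ₜ[R] b) = Coalgebra.counit (R := R) a • b := by
    intro a b; simp [hL]
  have hRtmul : ∀ (a b : H), Rr (a ⊗ₜ[R] b) = Coalgebra.counit (R := R) b • a := by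
    intro a b; simp [hR]
  have hLx : L (Coalgebra.comul (R := R) x) = x := by
    simp [hL]
  have hRx : Rr (Coalgebra.comul (R := R) x) = x := by
    simp [hR]
  have hLmid : ∀ k, k < m → L (Y (k+1)) ∈ ℬ (m+1-(k+1)) := by
    intro k hk
    refine map_range_mem L (hYmem (k+1) (by omega)) fun a ha b hb => ?_
    rw [hLtmul]
    exact Submodule.smul_mem _ _ hb
  have hRmid : ∀ k, k < m → Rr (Y (k+1)) ∈ ℬ (k+1) := by
    intro k hk
    refine map_range_mem Rr (hYmem (k+1) (by omega)) fun a ha b hb => ?_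
    rw [hRtmul]
    exact Submodule.smul_mem _ _ ha
  have hone : (1 : H) ∈ ℬ 0 := SetLike.one_mem_graded ℬ
  -- E1 : x = middle + counit w • 1 + z
  have hE1 : x = (∑ k ∈ Finset.range m, L (Y (k+1)))
      + Coalgebra.counit (R := R) w • (1 : H) + z := by
    rw [← hLx, hsplit]
    rw [map_add, map_add, map_sum, hz0, hwn, hLtmul, hLtmul, Bialgebra.counit_one, one_smul]
  have hE2 : x = (∑ k ∈ Finset.range m, Rr (Y (k+1)))
      + w + Coalgebra.counit (R := R) z • (1 : H) := by
    rw [← hRx, hsplit]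
    rw [map_add, map_add, map_sum, hz0, hwn, hRtmul, hRtmul, Bialgebra.counit_one, one_smul]
  -- z = x
  have hzx : z = x := by
    have := congrArg (pr (m+1)) hE1
    rw [pr_same _ x hx, map_add, map_add, map_sum, map_smul,
      pr_ne 0 (m+1) 1 hone (by omega), pr_same _ z hzmem] at this
    rw [Finset.sum_eq_zero (fun k hk =>
      pr_ne _ _ _ (hLmid k (Finset.mem_range.mp hk)) (by omega))] at this
    simpa using this.symm
  have hwx : w = x := by
    have := congrArg (pr (m+1)) hE2
    rw [pr_same _ x hx, map_add, map_add, map_sum, map_smul,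
      pr_ne 0 (m+1) 1 hone (by omega), pr_same _ w hwmem] at this
    rw [Finset.sum_eq_zero (fun k hk =>
      pr_ne _ _ _ (hRmid k (Finset.mem_range.mp hk)) (by
        have := Finset.mem_range.mp hk; omega))] at this
    simpa using this.symm
  have hcounit : Coalgebra.counit (R := R) x = 0 := by
    have := congrArg (pr 0) hE2
    rw [pr_ne (m+1) 0 x hx (by omega), map_add, map_add, map_sum, map_smul,
      pr_same 0 1 hone, pr_ne _ _ w hwmem (by omega)] at this
    rw [Finset.sum_eq_zero (fun k hk =>
      pr_ne _ _ _ (hRmid k (Finset.mem_range.mp hk)) (by omega))] at this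
    simp only [Finset.sum_const_zero, zero_add, add_zero] at this
    have h0 : algebraMap R H (Coalgebra.counit (R := R) z) = 0 := by
      rw [Algebra.algebraMap_eq_smul_one]; exact this.symm
    have h1 : Coalgebra.counit (R := R) z = 0 := by
      apply RingHom.injective (algebraMap R H)
      rw [h0, map_zero]
    rw [← hzx]; exact h1
  refine ⟨hcounit, m, fun k => Y (k+1), fun k hk => ⟨by omega, by omega, hYmem (k+1) (by omega)⟩, ?_⟩
  rw [hsplit, hz0, hwn, hzx, hwx]
  abel

/-- Expansion of a convolution product on a homogeneous element of positive degree. -/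
lemma conv_expand (f g : H →ₗ[R] A) {m : ℕ} {x : H} {y : ℕ → H ⊗[R] H}
    (hcom : Coalgebra.comul (R := R) x = 1 ⊗ₜ[R] x + x ⊗ₜ[R] 1 + ∑ k ∈ Finset.range m, y k) :
    conv f g x = f 1 * g x + f x * g 1 +
      ∑ k ∈ Finset.range m, LinearMap.mul' R A (TensorProduct.map f g (y k)) := by
  rw [conv_apply_def, hcom, map_add, map_add, map_sum, map_add, map_add, map_sum]
  simp [TensorProduct.map_tmul, LinearMap.mul'_apply]

end AuxGraded

theorem birkhoff_decomposition_unique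
    (ℬ : ℕ → Submodule R H) [GradedAlgebra ℬ]
    (hconn : Connected ℬ) (hgr : ComulGraded ℬ)
    (P : A →ₗ[R] A)
    (hidem : P.comp P = P)
    (hRB : ∀ a b : A, P a * P b = P (P a * b + a * P b - a * b))
    (himage : ∀ a b : A, a ∈ LinearMap.range P → b ∈ LinearMap.range P →
      a * b ∈ LinearMap.range P)
    (hker : ∀ a b : A, a ∈ LinearMap.ker P → b ∈ LinearMap.ker P →
      a * b ∈ LinearMap.ker P)
    (hker1 : (1 : A) ∈ LinearMap.ker P)
    (φ φm φp φmi ψm ψp ψmi : H →ₗ[R] A)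
    (hφ : IsCharacter φ)
    (hφm : IsCharacter φm) (hφp : IsCharacter φp)
    (hψm : IsCharacter ψm) (hψp : IsCharacter ψp)
    -- convolution inverses of the negative parts
    (hφi₁ : conv φm φmi = convUnit) (hφi₂ : conv φmi φm = convUnit)
    (hψi₁ : conv ψm ψmi = convUnit) (hψi₂ : conv ψmi ψm = convUnit)
    -- the two Birkhoff decompositions of φ
    (hdec₁ : φ = conv φmi φp) (hdec₂ : φ = conv ψmi ψp)
    -- value conditions
    (hφmval : ∀ n : ℕ, 0 < n → ∀ x ∈ ℬ n, φm x ∈ LinearMap.range P)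
    (hψmval : ∀ n : ℕ, 0 < n → ∀ x ∈ ℬ n, ψm x ∈ LinearMap.range P)
    (hφpval : ∀ x : H, φp x ∈ LinearMap.ker P)
    (hψpval : ∀ x : H, ψp x ∈ LinearMap.ker P) :
    φm = ψm ∧ φp = ψp := by
  classical
  by_cases hH : Nontrivial H
  case neg =>
    rw [not_nontrivial_iff_subsingleton] at hH
    constructor <;> (ext x; rw [Subsingleton.elim x (0 : H), map_zero, map_zero])
  -- the nontrivial case
  have hφmi1 : φmi 1 = 1 := by
    have h := congrArg (fun (F : H →ₗ[R] A) => F 1) hφi₁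
    simpa [conv_one, hφm.1, convUnit_one] using h
  set T : H →ₗ[R] A := conv ψm φmi with hTdef
  have hT1 : T 1 = 1 := by
    rw [hTdef, conv_one, hψm.1, hφmi1, one_mul]
  have hTφp : conv T φp = ψp := by
    rw [hTdef, conv_assoc, ← hdec₁, hdec₂, ← conv_assoc, hψi₁, conv_unit_left]
  -- main induction
  have main : ∀ n : ℕ, ∀ x ∈ ℬ n, 0 < n → φmi x ∈ LinearMap.range P ∧ T x = 0 := by
    intro n
    induction n using Nat.strong_induction_on with
    | _ n IH =>
      intro x hx hn
      obtain ⟨hcounit, m, y, hy, hcom⟩ := key_repr hconn hgr hn hx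
      -- step 1: φmi x ∈ range P
      have h0 : φm 1 * φmi x + φm x * φmi 1 +
          ∑ k ∈ Finset.range m, LinearMap.mul' R A (TensorProduct.map φm φmi (y k)) = 0 := by
        rw [← conv_expand φm φmi hcom, hφi₁]
        simp [convUnit, hcounit]
      rw [hφm.1, one_mul, hφmi1, mul_one] at h0
      have hmid1 : ∀ k ∈ Finset.range m,
          LinearMap.mul' R A (TensorProduct.map φm φmi (y k)) ∈ LinearMap.range P := by
        intro k hk
        obtain ⟨hk1, hk2, hmem⟩ := hy k (Finset.mem_range.mp hk)
        have hm : ((LinearMap.mul' R A) ∘ₗ TensorProduct.map φm φmi) (y k)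
            ∈ LinearMap.range P := by
          refine map_range_mem _ hmem fun a ha b hb => ?_
          simp only [LinearMap.comp_apply, TensorProduct.map_tmul, LinearMap.mul'_apply,
            Submodule.coe_subtype]
          exact himage _ _ (hφmval _ hk1 a ha)
            ((IH _ (by omega) b hb (by omega)).1)
        simpa using hm
      have hφmix : φmi x ∈ LinearMap.range P := by
        have he : φmi x = -(φm x) - ∑ k ∈ Finset.range m,
            LinearMap.mul' R A (TensorProduct.map φm φmi (y k)) := by
          linear_combination h0
        rw [he]
        exact sub_mem (neg_mem (hφmval _ hn x hx)) (Submodule.sum_mem _ hmid1)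
      -- step 2: T x ∈ range P
      have hTrange : T x ∈ LinearMap.range P := by
        have he : T x = ψm 1 * φmi x + ψm x * φmi 1 +
            ∑ k ∈ Finset.range m, LinearMap.mul' R A (TensorProduct.map ψm φmi (y k)) :=
          conv_expand ψm φmi hcom
        rw [he, hψm.1, one_mul, hφmi1, mul_one]
        refine add_mem (add_mem hφmix (hψmval _ hn x hx)) (Submodule.sum_mem _ ?_)
        intro k hk
        obtain ⟨hk1, hk2, hmem⟩ := hy k (Finset.mem_range.mp hk)
        have hm : ((LinearMap.mul' R A) ∘ₗ TensorProduct.map ψm φmi) (y k)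
            ∈ LinearMap.range P := by
          refine map_range_mem _ hmem fun a ha b hb => ?_
          simp only [LinearMap.comp_apply, TensorProduct.map_tmul, LinearMap.mul'_apply,
            Submodule.coe_subtype]
          exact himage _ _ (hψmval _ hk1 a ha)
            ((IH _ (by omega) b hb (by omega)).1)
        simpa using hm
      -- step 3: T x ∈ ker P
      have hTker : T x ∈ LinearMap.ker P := by
        have he : ψp x = T 1 * φp x + T x * φp 1 +
            ∑ k ∈ Finset.range m, LinearMap.mul' R A (TensorProduct.map T φp (y k)) := by
          rw [← hTφp]; exact conv_expand T φp hcom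
        have hzero : ∀ k ∈ Finset.range m,
            LinearMap.mul' R A (TensorProduct.map T φp (y k)) = 0 := by
          intro k hk
          obtain ⟨hk1, hk2, hmem⟩ := hy k (Finset.mem_range.mp hk)
          have hm : ((LinearMap.mul' R A) ∘ₗ TensorProduct.map T φp) (y k)
              ∈ (⊥ : Submodule R A) := by
            refine map_range_mem _ hmem fun a ha b hb => ?_
            simp only [LinearMap.comp_apply, TensorProduct.map_tmul, LinearMap.mul'_apply,
              Submodule.coe_subtype, Submodule.mem_bot]
            rw [(IH _ (by omega) a ha (by omega)).2, zero_mul]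
          simpa using hm
        rw [Finset.sum_eq_zero hzero, add_zero, hT1, one_mul, hφp.1, mul_one] at he
        have : T x = ψp x - φp x := by linear_combination -he
        rw [this]
        exact sub_mem (hψpval x) (hφpval x)
      -- combine: T x = 0
      obtain ⟨u, hu⟩ := hTrange
      have hPT : P (T x) = 0 := hTker
      refine ⟨hφmix, ?_⟩
      calc T x = P u := hu.symm
        _ = P (P u) := (LinearMap.congr_fun hidem u).symm
        _ = P (T x) := by rw [hu]
        _ = 0 := hPT
  -- T = convUnit
  have hTe : T = (convUnit : H →ₗ[R] A) := by
    ext x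
    refine DirectSum.Decomposition.inductionOn ℬ
      (motive := fun h => T h = (convUnit : H →ₗ[R] A) h)
      (by show T 0 = (convUnit : H →ₗ[R] A) 0; rw [map_zero, map_zero]) ?_
      (fun a b ha hb => by
        have ha' : T a = (convUnit : H →ₗ[R] A) a := ha
        have hb' : T b = (convUnit : H →ₗ[R] A) b := hb
        show T (a + b) = (convUnit : H →ₗ[R] A) (a + b)
        rw [map_add, map_add, ha', hb']) x
    intro i w
    show T (w : H) = (convUnit : H →ₗ[R] A) (w : H)
    rcases Nat.eq_zero_or_pos i with hi | hi
    · subst hi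
      obtain ⟨c, hc⟩ := Submodule.mem_span_singleton.mp (hconn w.2)
      rw [← hc, map_smul, map_smul, hT1, convUnit_one]
    · have h := main i w w.2 hi
      have hc := (key_repr hconn hgr hi w.2).1
      rw [h.2]
      simp [convUnit, hc]
  have hφmψm : φm = ψm := by
    have h1 : conv T φm = ψm := by
      rw [hTdef, conv_assoc, hφi₂, conv_unit_right]
    rw [hTe, conv_unit_left] at h1
    exact h1
  refine ⟨hφmψm, ?_⟩
  have hφpe : φp = conv φm φ := by
    rw [hdec₁, ← conv_assoc, hφi₁, conv_unit_left]
  have hψpe : ψp = conv ψm φ := by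
    rw [hdec₂, ← conv_assoc, hψi₁, conv_unit_left]
  rw [hφpe, hψpe, hφmψm]
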